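/- Let (𝔠_{n,M})_{n∈ℕ₀, M∈ℕ} ⊆ ℕ₀ satisfy 𝔠_{0,M} = 0 and 𝔠_{n,M} ≤ (2d+1)M^n + ∑_{l=1}^{n-1} M^{n-l}(d + 1 + 𝔠_{l,M} + 𝔠_{l-1,M}) for all n, M ∈ ℕ. Then 𝔠_{n,M} ≤ d (5M)^n for all n, M ∈ ℕ. -/
import Mathlib

lemma geom5 : ∀ n : ℕ, 1 ≤ n → 4 * (∑ l ∈ Finset.Icc 1 (n - 1), 5 ^ l) + 5 = 5 ^ n := by
  intro n hn
  induction n with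
  | zero => omega
  | succ n ih =>
    rcases Nat.eq_or_lt_of_le hn with h | h
    · simp [← h]
    · have hn1 : 1 ≤ n := by omega
      have hstep : (n + 1 - 1) = (n - 1) + 1 := by omega
      rw [hstep, Finset.sum_Icc_succ_top (by omega : 1 ≤ n - 1 + 1)]
      have hn2 : n - 1 + 1 = n := by omega
      rw [hn2]
      have := ih hn1
      have h5 : 5 ^ (n + 1) = 5 * 5 ^ n := by ring
      omega

theorem mlp_computational_cost (d : ℕ) (hd : 1 ≤ d) (𝔠 : ℕ → ℕ → ℕ)
    (h0 : ∀ M : ℕ, 1 ≤ M → 𝔠 0 M = 0)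
    (hrec : ∀ n M : ℕ, 1 ≤ n → 1 ≤ M →
      𝔠 n M ≤ (2 * d + 1) * M ^ n
        + ∑ l ∈ Finset.Icc 1 (n - 1), M ^ (n - l) * (d + 1 + 𝔠 l M + 𝔠 (l - 1) M))
    (n M : ℕ) (hn : 1 ≤ n) (hM : 1 ≤ M) :
    𝔠 n M ≤ d * (5 * M) ^ n := by
  induction n using Nat.strong_induction_on with
  | _ n IH =>
  -- sub-claim for all m < n
  have key : ∀ m : ℕ, m < n → 𝔠 m M ≤ d * (5 * M) ^ m := by
    intro m hm
    rcases Nat.eq_zero_or_pos m with rfl | hm1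
    · simp [h0 M hM]
    · exact IH m hm hm1
  have h5M : 1 ≤ 5 * M := by omega
  -- bound each summand
  have hterm : ∀ l ∈ Finset.Icc 1 (n - 1),
      M ^ (n - l) * (d + 1 + 𝔠 l M + 𝔠 (l - 1) M) ≤ 4 * d * 5 ^ l * M ^ n := by
    intro l hl
    simp only [Finset.mem_Icc] at hl
    have hln : l < n := by omega
    have h1 : 𝔠 l M ≤ d * (5 * M) ^ l := key l hln
    have h2 : 𝔠 (l - 1) M ≤ d * (5 * M) ^ (l - 1) := key (l - 1) (by omega)
    have h3 : (5 * M) ^ (l - 1) ≤ (5 * M) ^ l := Nat.pow_le_pow_right (by omega) (by omega)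
    have h4 : 1 ≤ (5 * M) ^ l := Nat.one_le_pow _ _ (by omega)
    have h5 : d * (5 * M) ^ (l - 1) ≤ d * (5 * M) ^ l := Nat.mul_le_mul_left d h3
    have hsum : d + 1 + 𝔠 l M + 𝔠 (l - 1) M ≤ 4 * d * (5 * M) ^ l := by nlinarith
    calc M ^ (n - l) * (d + 1 + 𝔠 l M + 𝔠 (l - 1) M)
        ≤ M ^ (n - l) * (4 * d * (5 * M) ^ l) := Nat.mul_le_mul_left _ hsum
      _ = 4 * d * 5 ^ l * M ^ n := by
          rw [mul_pow]
          have : M ^ (n - l) * M ^ l = M ^ n := by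
            rw [← pow_add]; congr 1; omega
          calc M ^ (n - l) * (4 * d * (5 ^ l * M ^ l))
              = 4 * d * 5 ^ l * (M ^ (n - l) * M ^ l) := by ring
            _ = 4 * d * 5 ^ l * M ^ n := by rw [this]
  have hsumle : ∑ l ∈ Finset.Icc 1 (n - 1), M ^ (n - l) * (d + 1 + 𝔠 l M + 𝔠 (l - 1) M)
      ≤ ∑ l ∈ Finset.Icc 1 (n - 1), 4 * d * 5 ^ l * M ^ n := Finset.sum_le_sum hterm
  have hsumeq : ∑ l ∈ Finset.Icc 1 (n - 1), 4 * d * 5 ^ l * M ^ n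
      = 4 * d * M ^ n * ∑ l ∈ Finset.Icc 1 (n - 1), 5 ^ l := by
    rw [Finset.mul_sum]; apply Finset.sum_congr rfl; intros; ring
  have hg := geom5 n hn
  set S := ∑ l ∈ Finset.Icc 1 (n - 1), 5 ^ l with hS
  have hMn : 1 ≤ M ^ n := Nat.one_le_pow _ _ (by omega)
  calc 𝔠 n M ≤ (2 * d + 1) * M ^ n
        + ∑ l ∈ Finset.Icc 1 (n - 1), M ^ (n - l) * (d + 1 + 𝔠 l M + 𝔠 (l - 1) M) :=
          hrec n M hn hM
    _ ≤ (2 * d + 1) * M ^ n + 4 * d * M ^ n * S := by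
        rw [hsumeq] at hsumle; omega
    _ ≤ d * (5 * M) ^ n := by
        rw [mul_pow]
        have : d * (5 ^ n * M ^ n) = d * ((4 * S + 5) * M ^ n) := by rw [hg]
        rw [this]
        nlinarith
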